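/- Let G be a group acting on a tree T without inversions, fix a base vertex b of T, let H be a subgroup of G, and let A be a nontrivial H-almost invariant subset of G which is enclosed by two distinct vertices u and v of T. Then for every edge on the (unique) path in T joining u and v, orienting it as s, the set A is equivalent to Z_s or to Z_s*, i.e. the symmetric difference of A with Z_s or with Z_s* is H-finite. -/

import Mathlib

section Defs

variable {G : Type*} [Group G]

/-- `W` is `H`-finite: contained in finitely many left cosets `Hg` of `H` in `G`. -/
def HFinite (H : Subgroup G) (W : Set G) : Prop :=
  ∃ F : Finset G, W ⊆ ⋃ g ∈ F, (· * g) '' (H : Set G)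

/-- The left translate `gX` of a subset `X` of `G`. -/
def leftTr (g : G) (X : Set G) : Set G := (g * ·) '' X

/-- `X` is an `H`-almost invariant subset of `G`: `HX = X` and for every `g` the
symmetric difference of `X` and `Xg` is `H`-finite. -/
def AlmostInv (H : Subgroup G) (X : Set G) : Prop :=
  (∀ h ∈ H, leftTr h X = X) ∧ ∀ g : G, HFinite H (symmDiff X ((· * g) '' X))

/-- `X` is a nontrivial `H`-almost invariant subset of `G`. -/
def NontrivialAI (H : Subgroup G) (X : Set G) : Prop :=
  AlmostInv H X ∧ ¬ HFinite H X ∧ ¬ HFinite H Xᶜ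

/-- `Y` crosses the `H`-almost invariant set `X`: none of the four corner sets is `H`-finite. -/
def Crosses (H : Subgroup G) (X Y : Set G) : Prop :=
  ¬ HFinite H (X ∩ Y) ∧ ¬ HFinite H (X ∩ Yᶜ) ∧ ¬ HFinite H (Xᶜ ∩ Y) ∧ ¬ HFinite H (Xᶜ ∩ Yᶜ)

/-- The coboundary `∂Y` of `Y` with respect to a finite generating set `S`. -/
def bdry (S : Finset G) (Y : Set G) : Set G :=
  {g : G | ∃ s ∈ (S : Set G) ∪ (S : Set G)⁻¹, (g ∈ Y) ≠ (g * s ∈ Y)}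

/-- `Y` crosses the `H`-almost invariant set `X` strongly: neither `∂Y ∩ X` nor
`∂Y ∩ X*` is `H`-finite. -/
def CrossesStrongly (S : Finset G) (H : Subgroup G) (X Y : Set G) : Prop :=
  ¬ HFinite H (bdry S Y ∩ X) ∧ ¬ HFinite H (bdry S Y ∩ Xᶜ)

/-- Two subsets of `G` are nested if one of the four corner sets is empty. -/
def Nested (U V : Set G) : Prop :=
  U ∩ V = ∅ ∨ U ∩ Vᶜ = ∅ ∨ Uᶜ ∩ V = ∅ ∨ Uᶜ ∩ Vᶜ = ∅

/-- The conjugate subgroup `gHg⁻¹`. -/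
def conjSub (g : G) (H : Subgroup G) : Subgroup G :=
  Subgroup.map (MulAut.conj g).toMonoidHom H

/-- A subgroup is two-ended if it contains an infinite cyclic subgroup of finite index. -/
def TwoEnded (H : Subgroup G) : Prop :=
  ∃ z : G, z ∈ H ∧ ¬ IsOfFinOrder z ∧ (Subgroup.zpowers z).relIndex H ≠ 0

/-- `G` is one-ended: `G` is infinite and every almost invariant subset of `G` (over the
trivial group) is finite or cofinite. -/
def OneEnded (G : Type*) [Group G] : Prop :=
  Infinite G ∧ ∀ X : Set G,
    (∀ g : G, (symmDiff X ((· * g) '' X)).Finite) → X.Finite ∨ Xᶜ.Finite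

/-- `G` is finitely presented. -/
def FinitelyPresentedGroup (G : Type*) [Group G] : Prop :=
  ∃ (n : ℕ) (R : Finset (FreeGroup (Fin n))),
    Nonempty (G ≃* FreeGroup (Fin n) ⧸ Subgroup.normalClosure (R : Set (FreeGroup (Fin n))))

/-- `Q(H)`: the collection of subsets of `G` which are almost invariant over some subgroup
commensurable with `H`. -/
def QH (H : Subgroup G) : Set (Set G) :=
  {X : Set G | ∃ K : Subgroup G, Subgroup.Commensurable K H ∧ AlmostInv K X}

/-- The Boolean algebra of subsets of `G` generated by a family `S` of subsets: the smallest
family containing `S` closed under complementation, finite intersections and finite unions. -/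
inductive BoolGen (S : Set (Set G)) : Set G → Prop
  | basic {U : Set G} : U ∈ S → BoolGen S U
  | compl {U : Set G} : BoolGen S U → BoolGen S Uᶜ
  | inter {U V : Set G} : BoolGen S U → BoolGen S V → BoolGen S (U ∩ V)
  | union {U V : Set G} : BoolGen S U → BoolGen S V → BoolGen S (U ∪ V)

/-- A subgroup is virtually free abelian of rank `m` if it has a finite index subgroup
isomorphic to `ℤ^m`. -/
def VirtuallyFreeAbelian (H : Subgroup G) (m : ℕ) : Prop :=
  ∃ K : Subgroup G, K ≤ H ∧ K.relIndex H ≠ 0 ∧ Nonempty (K ≃* Multiplicative (Fin m → ℤ))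

/-- `X` is `n`-canonical with respect to abelian groups: no translate of `X` crosses a
nontrivial almost invariant set over a virtually free abelian subgroup of rank at most `n`. -/
def NCanonicalAb (n : ℕ) (X : Set G) : Prop :=
  ∀ (L : Subgroup G) (m : ℕ), m ≤ n → VirtuallyFreeAbelian L m →
    ∀ Z : Set G, AlmostInv L Z → ¬ HFinite L Z → ¬ HFinite L Zᶜ →
      ∀ g : G, ¬ Crosses L Z (leftTr g X)

variable {ι : Type*}

/-- The set `E` of all translates of the sets `X i` and of their complements. -/
def Translates (X : ι → Set G) : Set (Set G) :=
  {U : Set G | ∃ (g : G) (i : ι), U = leftTr g (X i) ∨ U = (leftTr g (X i))ᶜ}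

/-- `W` is small for the element `U` of `E`: `W` is finite over the group `gHᵢg⁻¹`
associated to `U`. -/
def SmallOver (H : ι → Subgroup G) (X : ι → Set G) (U W : Set G) : Prop :=
  ∃ (g : G) (i : ι), (U = leftTr g (X i) ∨ U = (leftTr g (X i))ᶜ) ∧
    HFinite (conjSub g (H i)) W

/-- The four corner sets `U^{(*)} ∩ V^{(*)}`, indexed by pairs of booleans. -/
def corner (U V : Set G) (p : Bool × Bool) : Set G :=
  (cond p.1 U Uᶜ) ∩ (cond p.2 V Vᶜ)

/-- Condition (*): the family is in good position: whenever two of the four corner sets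
of a pair of elements of `E` are small, one of the corner sets is empty. -/
def GoodPosition (H : ι → Subgroup G) (X : ι → Set G) : Prop :=
  ∀ U ∈ Translates X, ∀ V ∈ Translates X,
    ∀ p q : Bool × Bool, p ≠ q →
      SmallOver H X U (corner U V p) → SmallOver H X U (corner U V q) →
        ∃ r : Bool × Bool, corner U V r = ∅

/-- The relation `U ≤ V` on `E`: `U ∩ V*` is empty or is the only small corner set. -/
def eLE (H : ι → Subgroup G) (X : ι → Set G) (U V : Set G) : Prop :=
  U ∩ Vᶜ = ∅ ∨
    (SmallOver H X U (U ∩ Vᶜ) ∧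
      ∀ p : Bool × Bool, p ≠ (true, false) → ¬ SmallOver H X U (corner U V p))

/-- The relation `U < V` on `E`. -/
def eLT (H : ι → Subgroup G) (X : ι → Set G) (U V : Set G) : Prop :=
  eLE H X U V ∧ U ≠ V

/-- `V` crosses the element `U` of `E`: no corner set is small. -/
def CrossesE (H : ι → Subgroup G) (X : ι → Set G) (U V : Set G) : Prop :=
  ∀ p : Bool × Bool, ¬ SmallOver H X U (corner U V p)

/-- `V` crosses the element `U` of `E` strongly. -/
def StronglyCrossesE (S : Finset G) (H : ι → Subgroup G) (X : ι → Set G) (U V : Set G) : Prop :=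
  ∃ (g : G) (i : ι), (U = leftTr g (X i) ∨ U = (leftTr g (X i))ᶜ) ∧
    ¬ HFinite (conjSub g (H i)) (bdry S V ∩ U) ∧ ¬ HFinite (conjSub g (H i)) (bdry S V ∩ Uᶜ)

/-- The relation on `E` generating the cross-connected components of `Ē`: two elements are
related if they coincide, are complementary, or cross. -/
def ccRelSet (H : ι → Subgroup G) (X : ι → Set G) (U V : Set G) : Prop :=
  U ∈ Translates X ∧ V ∈ Translates X ∧ (U = V ∨ U = Vᶜ ∨ CrossesE H X U V)

/-- `U` and `V` determine the same cross-connected component of `Ē`. -/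
def SameCCC (H : ι → Subgroup G) (X : ι → Set G) (U V : Set G) : Prop :=
  Relation.EqvGen (ccRelSet H X) U V

/-- `V̄` lies between `Ū` and `W̄` in `Ē`: some representatives satisfy `u < v < w`. -/
def BetweenBar (H : ι → Subgroup G) (X : ι → Set G) (U V W : Set G) : Prop :=
  ∃ u v w : Set G, (u = U ∨ u = Uᶜ) ∧ (v = V ∨ v = Vᶜ) ∧ (w = W ∨ w = Wᶜ) ∧
    eLT H X u v ∧ eLT H X v w

/-- The setoid on `E` whose classes are the cross-connected components of `Ē`. -/
def cccSetoid (H : ι → Subgroup G) (X : ι → Set G) :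
    Setoid {U : Set G // U ∈ Translates X} where
  r u v := SameCCC H X u.1 v.1
  iseqv := by
    refine ⟨fun u => Relation.EqvGen.refl _, ?_, ?_⟩
    · exact fun h => Relation.EqvGen.symm _ _ h
    · exact fun h₁ h₂ => Relation.EqvGen.trans _ _ _ h₁ h₂

theorem leftTr_leftTr (g g' : G) (X : Set G) : leftTr g (leftTr g' X) = leftTr (g * g') X := by
  simp only [leftTr, Set.image_image, mul_assoc]

theorem leftTr_compl (g : G) (X : Set G) : leftTr g Xᶜ = (leftTr g X)ᶜ :=
  Set.image_compl_eq (Group.mulLeft_bijective g)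

/-- Left translation as a map from `E` to `E`. -/
def translateE (X : ι → Set G) (g : G) (u : {U : Set G // U ∈ Translates X}) :
    {U : Set G // U ∈ Translates X} :=
  ⟨leftTr g u.1, by
    obtain ⟨g', i, h | h⟩ := u.2
    · exact ⟨g * g', i, Or.inl (by rw [h, leftTr_leftTr])⟩
    · exact ⟨g * g', i, Or.inr (by rw [h, leftTr_compl, leftTr_leftTr])⟩⟩

/-- Betweenness for cross-connected components: `B` lies between the distinct components
`A` and `C` if there are elements enclosed by them with `u < v < w`. -/
def BetweenCCC (H : ι → Subgroup G) (X : ι → Set G)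
    (A B C : Quotient (cccSetoid H X)) : Prop :=
  A ≠ B ∧ B ≠ C ∧ A ≠ C ∧
    ∃ u v w : {U : Set G // U ∈ Translates X},
      Quotient.mk (cccSetoid H X) u = A ∧ Quotient.mk (cccSetoid H X) v = B ∧
        Quotient.mk (cccSetoid H X) w = C ∧
        eLT H X u.1 v.1 ∧ eLT H X v.1 w.1

/-- The half-tree `Y_s` determined by the oriented edge `s = (u,v)`: the vertices
reachable from the terminal vertex `v` after deleting the edge `{u,v}`. -/
def halfTree {V : Type*} (T : SimpleGraph V) (u v : V) : Set V :=
  {w : V | (T.deleteEdges {s(u, v)}).Reachable v w}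

/-- With respect to a base vertex `b`, the subset `Z_s` of `G` determined by the
oriented edge `s = (u,v)`. -/
def Zset {V : Type*} [MulAction G V] (T : SimpleGraph V) (b u v : V) : Set G :=
  {g : G | g • b ∈ halfTree T u v}

/-- The vertex `v` encloses the `H`-almost invariant set `A`: for every edge `s`
oriented towards `v`, either `A ∩ Z_s*` or `A* ∩ Z_s*` is `H`-finite. -/
def Encloses {V : Type*} [MulAction G V] (T : SimpleGraph V) (b : V) (H : Subgroup G)
    (v : V) (A : Set G) : Prop :=
  ∀ u : V, T.Adj u v → HFinite H (A ∩ (Zset T b u v)ᶜ) ∨ HFinite H (Aᶜ ∩ (Zset T b u v)ᶜ)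

end Defs

section Aux

open SimpleGraph

variable {G : Type*} [Group G]

lemma hfin_mono {H : Subgroup G} {W W' : Set G} (h : HFinite H W') (hs : W ⊆ W') :
    HFinite H W := ⟨h.choose, hs.trans h.choose_spec⟩

lemma hfin_union {H : Subgroup G} {W W' : Set G} (h : HFinite H W) (h' : HFinite H W') :
    HFinite H (W ∪ W') := by
  classical
  obtain ⟨F, hF⟩ := h; obtain ⟨F', hF'⟩ := h'
  refine ⟨F ∪ F', Set.union_subset (hF.trans ?_) (hF'.trans ?_)⟩ <;>
  · intro x hx
    rw [Set.mem_iUnion₂] at hx ⊢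
    obtain ⟨g, hg, hx⟩ := hx
    exact ⟨g, by simp [hg], hx⟩

variable {V : Type*} {T : SimpleGraph V}

lemma bridge_of_tree (ht : T.IsTree) {x y : V} (h : T.Adj x y) :
    ¬ (T.deleteEdges {s(x, y)}).Reachable x y := by
  have hb := (isAcyclic_iff_forall_adj_isBridge.mp ht.IsAcyclic) h
  rw [isBridge_iff] at hb
  exact hb

lemma mem_halfTree_self {x y : V} : y ∈ halfTree T x y := Reachable.refl y

lemma halfTree_cover_aux {x y : V} : ∀ {a z : V}, T.Walk a z →
    a ∈ halfTree T x y ∪ halfTree T y x → z ∈ halfTree T x y ∪ halfTree T y x := by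
  intro a z w
  induction w with
  | nil => exact id
  | @cons a b z hab w ih =>
    intro ha
    apply ih
    by_cases he : s(a, b) = s(x, y)
    · rw [Sym2.eq_iff] at he
      rcases he with ⟨rfl, rfl⟩ | ⟨rfl, rfl⟩
      · exact Or.inl mem_halfTree_self
      · exact Or.inr mem_halfTree_self
    · rcases ha with h1 | h2
      · have hadj : (T.deleteEdges {s(x, y)}).Adj a b := by
          rw [deleteEdges_adj]; exact ⟨hab, by simpa using he⟩
        exact Or.inl (h1.trans hadj.reachable)
      · have hadj : (T.deleteEdges {s(y, x)}).Adj a b := by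
          rw [deleteEdges_adj]
          refine ⟨hab, fun hq => he ?_⟩
          rw [Set.mem_singleton_iff] at hq
          exact hq.trans Sym2.eq_swap
        exact Or.inr (h2.trans hadj.reachable)

lemma halfTree_cover (ht : T.IsTree) {x y : V} (z : V) :
    z ∈ halfTree T x y ∨ z ∈ halfTree T y x := by
  obtain ⟨w⟩ := ht.isConnected.preconnected y z
  exact halfTree_cover_aux w (Or.inl mem_halfTree_self)

lemma halfTree_compl (ht : T.IsTree) {x y : V} (h : T.Adj x y) :
    (halfTree T x y)ᶜ = halfTree T y x := by
  ext z
  simp only [Set.mem_compl_iff]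
  constructor
  · intro hz
    rcases halfTree_cover ht z with h1 | h2
    · exact absurd h1 hz
    · exact h2
  · intro h2 h1
    apply bridge_of_tree ht h
    have h2' : (T.deleteEdges {s(x, y)}).Reachable x z := by
      have h2'' : (T.deleteEdges {s(y, x)}).Reachable x z := h2
      rwa [Sym2.eq_swap] at h2''
    exact h2'.trans (Reachable.symm h1)

lemma halfTree_nested (ht : T.IsTree) {u c w : V} (h1 : T.Adj u c) (h2 : T.Adj c w)
    (hne : w ≠ u) : halfTree T c w ⊆ halfTree T u c := by
  classical
  intro z hz
  obtain ⟨q⟩ := hz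
  have hq : ∀ e ∈ q.edges, e ∈ (T.deleteEdges {s(u, c)}).edgeSet := by
    intro e he
    have heT : e ∈ (T.deleteEdges {s(c, w)}).edgeSet := q.edges_subset_edgeSet he
    rw [edgeSet_deleteEdges] at heT ⊢
    refine ⟨heT.1, fun heq => ?_⟩
    rw [Set.mem_singleton_iff] at heq
    subst heq
    have hc : c ∈ q.support := q.snd_mem_support_of_mem_edges he
    exact bridge_of_tree ht h2 ((q.takeUntil c hc).reachable.symm)
  have hcw : (T.deleteEdges {s(u, c)}).Adj c w := by
    rw [deleteEdges_adj]
    refine ⟨h2, fun hmem => ?_⟩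
    rw [Set.mem_singleton_iff, Sym2.eq_iff] at hmem
    rcases hmem with ⟨hcu', -⟩ | ⟨-, hwu⟩
    · exact h1.ne hcu'.symm
    · exact hne hwu
  exact hcw.reachable.trans ⟨q.transfer _ hq⟩

lemma halfTree_dart_subset (ht : T.IsTree) {c v : V} (p : T.Walk c v) :
    ∀ {u : V} (h : T.Adj u c), (SimpleGraph.Walk.cons h p).IsPath →
      ∀ d ∈ (SimpleGraph.Walk.cons h p).darts,
        halfTree T d.toProd.1 d.toProd.2 ⊆ halfTree T u c := by
  induction p with
  | nil =>
    intro u h hp d hd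
    simp only [Walk.darts_cons, Walk.darts_nil, List.mem_singleton] at hd
    subst hd
    exact subset_rfl
  | @cons c b v h' p' ih =>
    intro u h hp d hd
    rw [Walk.darts_cons, List.mem_cons] at hd
    rcases hd with rfl | hd'
    · exact subset_rfl
    · rw [Walk.cons_isPath_iff] at hp
      have hsub := ih h' hp.1 d hd'
      have hbu : b ≠ u := by
        intro hbu
        apply hp.2
        rw [← hbu, Walk.support_cons]
        exact List.mem_cons_of_mem _ p'.start_mem_support
      exact hsub.trans (halfTree_nested ht h h' hbu)

lemma exists_adj_halfTree (ht : T.IsTree) {u v : V} (p : T.Walk u v) (hp : p.IsPath)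
    {d : T.Dart} (hd : d ∈ p.darts) :
    ∃ c : V, T.Adj c u ∧ halfTree T d.toProd.1 d.toProd.2 ⊆ (halfTree T c u)ᶜ := by
  cases p with
  | nil => simp [Walk.darts_nil] at hd
  | @cons _ c _ h q =>
    refine ⟨c, h.symm, ?_⟩
    rw [halfTree_compl ht h.symm]
    exact halfTree_dart_subset ht q h hp d hd

end Aux
/-- If a nontrivial `H`-almost invariant set `A` is enclosed by two distinct
vertices `u` and `v` of a `G`-tree, then for every (oriented) edge on the path joining `u`
and `v`, `A` is equivalent to `Z_s` or to `Z_s*`. -/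
theorem stmt19 {G V : Type*} [Group G] [MulAction G V] (T : SimpleGraph V)
    (htree : T.IsTree)
    (hadj : ∀ (g : G) (x y : V), T.Adj x y → T.Adj (g • x) (g • y))
    (hinv : ∀ (g : G) (x y : V), T.Adj x y → ¬(g • x = y ∧ g • y = x))
    (b : V) (H : Subgroup G) (A : Set G) (hA : NontrivialAI H A)
    (u v : V) (huv : u ≠ v)
    (hu : Encloses T b H u A) (hv : Encloses T b H v A) :
    ∀ p : T.Walk u v, p.IsPath → ∀ d ∈ p.darts,
      HFinite H (symmDiff A (Zset T b d.toProd.1 d.toProd.2)) ∨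
      HFinite H (symmDiff A (Zset T b d.toProd.1 d.toProd.2)ᶜ) := by
  intro p hp d hd
  obtain ⟨c, hcu, hs1⟩ := exists_adj_halfTree htree p hp hd
  have hdrev : d.symm ∈ p.reverse.darts := by
    rw [SimpleGraph.Walk.mem_darts_reverse, SimpleGraph.Dart.symm_symm]
    exact hd
  obtain ⟨c', hcv, hs2⟩ := exists_adj_halfTree htree p.reverse hp.reverse hdrev
  have hxy : T.Adj d.toProd.1 d.toProd.2 := d.adj
  set Z : Set G := Zset T b d.toProd.1 d.toProd.2 with hZdef
  have hZc : Zᶜ = Zset T b d.toProd.2 d.toProd.1 := by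
    ext g
    simp only [hZdef, Zset, Set.mem_compl_iff, Set.mem_setOf_eq,
      ← halfTree_compl htree hxy]
  have k1 : HFinite H (A ∩ Z) ∨ HFinite H (Aᶜ ∩ Z) := by
    have hsub : Z ⊆ (Zset T b c u)ᶜ := fun g hg hmem => hs1 hg hmem
    rcases hu c hcu with h | h
    · exact Or.inl (hfin_mono h (Set.inter_subset_inter_right _ hsub))
    · exact Or.inr (hfin_mono h (Set.inter_subset_inter_right _ hsub))
  have k2 : HFinite H (A ∩ Zᶜ) ∨ HFinite H (Aᶜ ∩ Zᶜ) := by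
    have hsub : Zᶜ ⊆ (Zset T b c' v)ᶜ := by
      rw [hZc]
      intro g hg hmem
      exact hs2 hg hmem
    rcases hv c' hcv with h | h
    · exact Or.inl (hfin_mono h (Set.inter_subset_inter_right _ hsub))
    · exact Or.inr (hfin_mono h (Set.inter_subset_inter_right _ hsub))
  rcases k1 with k1 | k1 <;> rcases k2 with k2 | k2
  · exfalso
    apply hA.2.1
    have := hfin_union k1 k2
    rwa [Set.inter_union_compl] at this
  · right
    refine hfin_mono (hfin_union k1 k2) ?_
    intro g hg
    rw [Set.mem_symmDiff] at hg
    rcases hg with ⟨h1, h2⟩ | ⟨h1, h2⟩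
    · exact Or.inl ⟨h1, by simpa using h2⟩
    · exact Or.inr ⟨h2, h1⟩
  · left
    refine hfin_mono (hfin_union k2 k1) ?_
    intro g hg
    rw [Set.mem_symmDiff] at hg
    rcases hg with ⟨h1, h2⟩ | ⟨h1, h2⟩
    · exact Or.inl ⟨h1, h2⟩
    · exact Or.inr ⟨h2, h1⟩
  · exfalso
    apply hA.2.2
    have := hfin_union k1 k2
    rwa [Set.inter_union_compl] at this
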